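/- The equivalence relation E_0^ω on (2^ω)^ω, defined by (x_n) E_0^ω (y_n) iff for every n the sequences x_n and y_n eventually agree, is Borel reducible to the equivalence relation =⁺ on (2^ω)^ω of coding the same countable set, i.e., (x_n) =⁺ (y_n) iff {x_n : n ∈ ω} = {y_n : n ∈ ω}. -/
import Mathlib


/-- `E₀` on Cantor space: eventual agreement. -/
def E0rel (x y : ℕ → Bool) : Prop := ∃ m, ∀ n ≥ m, x n = y n

lemma E0rel_symm {x y : ℕ → Bool} (h : E0rel x y) : E0rel y x := by
  obtain ⟨m, hm⟩ := h
  exact ⟨m, fun n hn => (hm n hn).symm⟩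

lemma E0rel_trans {x y z : ℕ → Bool} (h : E0rel x y) (h' : E0rel y z) : E0rel x z := by
  obtain ⟨m, hm⟩ := h
  obtain ⟨m', hm'⟩ := h'
  exact ⟨max m m', fun n hn => (hm n (le_trans (le_max_left _ _) hn)).trans
    (hm' n (le_trans (le_max_right _ _) hn))⟩

/-- Enumeration of finite binary strings. -/
def listOf : ℕ → List Bool
  | 0 => []
  | (n + 1) => (n % 2 == 1) :: listOf (n / 2)
decreasing_by exact Nat.lt_succ_of_le (Nat.div_le_self n 2)

/-- Code of a finite binary string. -/
def listTo : List Bool → ℕ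
  | [] => 0
  | b :: s => 2 * listTo s + (if b then 1 else 0) + 1

lemma listOf_listTo (s : List Bool) : listOf (listTo s) = s := by
  induction s with
  | nil => rw [show listTo [] = 0 from rfl, listOf]
  | cons b s ih =>
    have h : listTo (b :: s) = (2 * listTo s + (if b then 1 else 0)) + 1 := rfl
    rw [h, listOf]
    have h3 : (2 * listTo s + (if b then 1 else 0)) / 2 = listTo s := by
      cases b <;> simp <;> omega
    rw [h3, ih]
    cases b <;> simp <;> omega

/-- Tag a sequence with a natural number: `n` trues, one false, then the sequence. -/
def tagF (n : ℕ) (z : ℕ → Bool) : ℕ → Bool :=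
  fun k => if k < n then true else if k = n then false else z (k - (n + 1))

lemma tagF_large (n : ℕ) (z : ℕ → Bool) (i : ℕ) : tagF n z (i + n + 1) = z i := by
  unfold tagF
  rw [if_neg (by omega), if_neg (by omega)]
  congr 1
  omega

lemma tagF_inj {n n' : ℕ} {z z' : ℕ → Bool} (h : tagF n z = tagF n' z') :
    n = n' ∧ z = z' := by
  have key : ∀ a b : ℕ, ∀ w w' : ℕ → Bool, tagF a w = tagF b w' → ¬ a < b := by
    intro a b w w' hab hlt
    have h1 := congrFun hab a
    simp only [tagF, lt_irrefl, if_false, if_pos rfl, if_pos hlt] at h1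
    simp at h1
  have hn : n = n' :=
    le_antisymm (not_lt.1 (key n' n z' z h.symm)) (not_lt.1 (key n n' z z' h))
  subst hn
  refine ⟨rfl, funext fun i => ?_⟩
  have h1 := congrFun h (i + n  + 1)
  rw [tagF_large, tagF_large] at h1
  exact h1

/-- Prepend a finite string to a sequence. -/
def appF (s : List Bool) (z : ℕ → Bool) : ℕ → Bool :=
  fun i => if h : i < s.length then s.get ⟨i, h⟩ else z (i - s.length)

lemma E0rel_appF (s : List Bool) (z : ℕ → Bool) :
    E0rel (appF s (fun i => z (i + s.length))) z := by
  refine ⟨s.length, fun i hi => ?_⟩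
  simp only [appF, dif_neg (not_lt.2 hi)]
  rw [Nat.sub_add_cancel hi]

lemma exists_appF {w z : ℕ → Bool} (h : E0rel w z) :
    ∃ s : List Bool, w = appF s (fun i => z (i + s.length)) := by
  obtain ⟨m, hm⟩ := h
  refine ⟨List.ofFn (fun j : Fin m => w j), funext fun i => ?_⟩
  simp only [appF, List.length_ofFn]
  by_cases hi : i < m
  · rw [dif_pos hi, List.get_ofFn]
    rfl
  · rw [dif_neg hi]
    rw [Nat.sub_add_cancel (not_lt.1 hi)]
    exact hm i (not_lt.1 hi)

/-- The reduction function. -/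
def redF (x : ℕ → ℕ → Bool) : ℕ → ℕ → Bool :=
  fun m =>
    tagF (Nat.unpair m).1
      (appF (listOf (Nat.unpair m).2)
        (fun i => x (Nat.unpair m).1 (i + (listOf (Nat.unpair m).2).length)))

lemma redF_mem {x : ℕ → ℕ → Bool} {w : ℕ → Bool} :
    w ∈ Set.range (redF x) ↔
      ∃ n : ℕ, ∃ s : List Bool,
        w = tagF n (appF s (fun i => x n (i + s.length))) := by
  constructor
  · rintro ⟨m, rfl⟩
    exact ⟨(Nat.unpair m).1, listOf (Nat.unpair m).2, rfl⟩
  · rintro ⟨n, s, rfl⟩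
    refine ⟨Nat.pair n (listTo s), ?_⟩
    simp [redF, Nat.unpair_pair, listOf_listTo]

lemma redF_subset {x y : ℕ → ℕ → Bool} (h : ∀ n, E0rel (x n) (y n)) :
    Set.range (redF x) ⊆ Set.range (redF y) := by
  intro w hw
  rw [redF_mem] at hw ⊢
  obtain ⟨n, s, rfl⟩ := hw
  have h1 : E0rel (appF s (fun i => x n (i + s.length))) (y n) :=
    E0rel_trans (E0rel_appF s (x n)) (h n)
  obtain ⟨t, ht⟩ := exists_appF h1
  exact ⟨n, t, by rw [ht]⟩

theorem measurable_redF : Measurable redF := by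
  refine measurable_pi_lambda _ fun m => measurable_pi_lambda _ fun j => ?_
  unfold redF tagF appF
  split_ifs with h1 h2 h3
  · exact measurable_const
  · exact measurable_const
  · exact measurable_const
  · exact (measurable_pi_apply _).comp (measurable_pi_apply _)

/-- `E₀^ω` on `(2^ω)^ω` is Borel reducible to `=⁺`, the relation of coding
the same countable set. -/
theorem E0omega_reducible_to_eqPlus :
    ∃ f : (ℕ → ℕ → Bool) → (ℕ → ℕ → Bool), Measurable f ∧
      ∀ x y : ℕ → ℕ → Bool,
        (∀ n, E0rel (x n) (y n)) ↔ Set.range (f x) = Set.range (f y) := by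
  refine ⟨redF, measurable_redF, fun x y => ?_⟩
  constructor
  · intro h
    exact le_antisymm (redF_subset h) (redF_subset fun n => E0rel_symm (h n))
  · intro h n
    have hx : tagF n (x n) ∈ Set.range (redF x) := by
      rw [redF_mem]
      refine ⟨n, [], ?_⟩
      have he : (appF [] fun i => x n (i + ([] : List Bool).length)) = x n := by
        funext i
        simp [appF]
      rw [he]
    rw [h, redF_mem] at hx
    obtain ⟨n', t, ht⟩ := hx
    obtain ⟨hn, hz⟩ := tagF_inj ht
    subst hn
    rw [hz]
    exact E0rel_appF t (y n)
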